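/- In the critical case, the quasi-stationary generating function is Π_{λ_c}(x) = 2(1/√(1-x) - 1), i.e., lim_{n→∞}(g^{∘n}(x) - g^{∘n}(0))/(g^{∘n})'(0) = 2(1/√(1-x) - 1) where g^{∘r}(x) = 1 - (r + 1/√(1-x))^{-2}. -/

import Mathlib

/-- The critical offspring generating function `g_{λ_c}` (case `h = 1/4`),
extended continuously at `0` by `g(0) = 3/4`. -/
noncomputable def gCrit (x : ℝ) : ℝ :=
  if x = 0 then 3/4
  else 1/x - (1 - x) * (1 - Real.sqrt (1 - x)) / (x^2 / 2)

lemma gCrit_step {t : ℝ} (ht : 0 < t) :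
    gCrit (1 - (t ^ 2)⁻¹) = 1 - ((t + 1) ^ 2)⁻¹ := by
  rcases eq_or_ne t 1 with h | h
  · subst h
    norm_num [gCrit]
  · have ht0 : t ≠ 0 := ne_of_gt ht
    have ht1 : t + 1 ≠ 0 := by positivity
    have hy : 1 - (t ^ 2)⁻¹ ≠ 0 := by
      intro h0
      have : (t ^ 2)⁻¹ = 1 := by linarith [sub_eq_zero.mp h0]
      have ht2 : t ^ 2 = 1 := by
        field_simp at this; linarith
      have : (t - 1) * (t + 1) = 0 := by ring_nf; linarith
      rcases mul_eq_zero.mp this with h' | h'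
      · exact h (by linarith)
      · exact ht1 (by linarith)
    unfold gCrit
    rw [if_neg hy]
    have h1 : (1 : ℝ) - (1 - (t ^ 2)⁻¹) = (t⁻¹) ^ 2 := by
      rw [sub_sub_cancel, inv_pow]
    rw [h1, Real.sqrt_sq (by positivity)]
    have htm1 : t - 1 ≠ 0 := sub_ne_zero.mpr h
    have hy2 : 1 - (t ^ 2)⁻¹ = (t - 1) * (t + 1) / t ^ 2 := by
      field_simp; ring
    rw [hy2]
    field_simp
    ring

lemma gCrit_iter {x : ℝ} (hx : x < 1) (n : ℕ) :
    gCrit^[n] x = 1 - (((n : ℝ) + (Real.sqrt (1 - x))⁻¹) ^ 2)⁻¹ := by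
  have hs : 0 < Real.sqrt (1 - x) := Real.sqrt_pos.mpr (by linarith)
  induction n with
  | zero =>
    simp only [Function.iterate_zero, id_eq, Nat.cast_zero, zero_add, inv_pow, inv_inv]
    rw [Real.sq_sqrt (by linarith : (0:ℝ) ≤ 1 - x)]
    ring
  | succ n ih =>
    rw [Function.iterate_succ_apply', ih]
    have ht : 0 < (n : ℝ) + (Real.sqrt (1 - x))⁻¹ := by positivity
    have := gCrit_step ht
    rw [this]
    push_cast
    ring_nf

lemma gCrit_iter_hasDerivAt (n : ℕ) :
    HasDerivAt (gCrit^[n]) ((((n : ℝ) + 1) ^ 3)⁻¹) 0 := by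
  have h0 : HasDerivAt (fun x : ℝ => 1 - x) (-1) 0 := by
    simpa using (hasDerivAt_id (0 : ℝ)).const_sub 1
  have hs : HasDerivAt (fun x : ℝ => Real.sqrt (1 - x)) (-(1 / 2)) 0 := by
    have h1 : (1 : ℝ) - 0 ≠ 0 := by norm_num
    have := (Real.hasDerivAt_sqrt h1).comp 0 h0
    simpa [Real.sqrt_one, Function.comp_def, Pi.inv_def] using this
  have hinv : HasDerivAt (fun x : ℝ => (Real.sqrt (1 - x))⁻¹) (1 / 2) 0 := by
    have hne : Real.sqrt (1 - 0) ≠ 0 := by norm_num [Real.sqrt_one]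
    have := hs.inv hne
    simpa [Real.sqrt_one, Function.comp_def, Pi.inv_def] using this
  have hadd : HasDerivAt (fun x : ℝ => (n : ℝ) + (Real.sqrt (1 - x))⁻¹) (1 / 2) 0 :=
    hinv.const_add _
  have hsq : HasDerivAt (fun x : ℝ => ((n : ℝ) + (Real.sqrt (1 - x))⁻¹) ^ 2)
      ((n : ℝ) + 1) 0 := by
    have := hadd.pow 2
    norm_num [Real.sqrt_one] at this
    refine this.congr_deriv ?_
    ring
  have hne2 : ((n : ℝ) + (Real.sqrt (1 - 0))⁻¹) ^ 2 ≠ 0 := by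
    norm_num [Real.sqrt_one]
    positivity
  have hF : HasDerivAt (fun x : ℝ => 1 - (((n : ℝ) + (Real.sqrt (1 - x))⁻¹) ^ 2)⁻¹)
      ((((n : ℝ) + 1) ^ 3)⁻¹) 0 := by
    have := (hsq.inv hne2).const_sub 1
    norm_num [Real.sqrt_one] at this
    refine this.congr_deriv ?_
    have hpos : (0 : ℝ) < (n : ℝ) + 1 := by positivity
    field_simp
    ring
  refine hF.congr_of_eventuallyEq ?_
  filter_upwards [Iio_mem_nhds (by norm_num : (0 : ℝ) < 1)] with y hy
  exact gCrit_iter hy n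

/-- in the critical case, the quasi-stationary generating function is
`Π_{λ_c}(x) = lim_n (g^{∘n}(x) - g^{∘n}(0))/(g^{∘n})'(0) = 2(1/√(1-x) - 1)`. -/
theorem stmt_12 (d : ℕ → ℝ) (hd : ∀ n : ℕ, HasDerivAt (gCrit^[n]) (d n) 0) :
    ∀ x ∈ Set.Ico (0 : ℝ) 1,
      Filter.Tendsto (fun n : ℕ => (gCrit^[n] x - gCrit^[n] 0) / d n)
        Filter.atTop (nhds (2 * (1 / Real.sqrt (1 - x) - 1))) := by
  intro x hx
  obtain ⟨hx0, hx1⟩ := hx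
  set s : ℝ := (Real.sqrt (1 - x))⁻¹ with hs_def
  have hsqrt_pos : 0 < Real.sqrt (1 - x) := Real.sqrt_pos.mpr (by linarith)
  have hs_pos : 0 < s := inv_pos.mpr hsqrt_pos
  have hdn : ∀ n : ℕ, d n = ((((n : ℝ) + 1) ^ 3)⁻¹) := fun n =>
    (hd n).unique (gCrit_iter_hasDerivAt n)
  -- c n = 1/(n+s) → 0
  have hc : Filter.Tendsto (fun n : ℕ => ((n : ℝ) + s)⁻¹) Filter.atTop (nhds 0) := by
    apply Filter.Tendsto.inv_tendsto_atTop
    exact Filter.tendsto_atTop_add_const_right _ s tendsto_natCast_atTop_atTop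
  have hmain : Filter.Tendsto
      (fun n : ℕ => (s - 1) * ((1 + (1 - s) * ((n : ℝ) + s)⁻¹) *
        (2 + (1 - s) * ((n : ℝ) + s)⁻¹)))
      Filter.atTop (nhds ((s - 1) * ((1 + (1 - s) * 0) * (2 + (1 - s) * 0)))) := by
    exact (tendsto_const_nhds.add (tendsto_const_nhds.mul hc)).mul
      (tendsto_const_nhds.add (tendsto_const_nhds.mul hc)) |>.const_mul _
  have hlim_eq : (s - 1) * ((1 + (1 - s) * 0) * (2 + (1 - s) * 0))
      = 2 * (1 / Real.sqrt (1 - x) - 1) := by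
    rw [one_div, ← hs_def]; ring
  rw [← hlim_eq]
  refine Filter.Tendsto.congr (fun n => ?_) hmain
  have hns : (0 : ℝ) < (n : ℝ) + s := by positivity
  have hn1 : (0 : ℝ) < (n : ℝ) + 1 := by positivity
  rw [gCrit_iter hx1 n, gCrit_iter (by norm_num : (0:ℝ) < 1) n, hdn n]
  rw [show (1 : ℝ) - 0 = 1 by ring, Real.sqrt_one, inv_one, ← hs_def]
  field_simp
  ring
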